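/- For a binomial random variable X ~ B(n, p) and integer k with p < k/n < 1, P(X ≥ k) ≥ (1/√(2n)) · exp(-n · D(k/n || p)), where D(x||y) = x log(x/y) + (1-x) log((1-x)/(1-y)) is the relative entropy. -/

import Mathlib

/-- Binary relative entropy `D(x‖y)`. -/
noncomputable def relEntropy (x y : ℝ) : ℝ :=
  x * Real.log (x / y) + (1 - x) * Real.log ((1 - x) / (1 - y))

section AuxStirling

open Real Stirling Nat

set_option maxHeartbeats 1000000

lemma sqrtPi_le_stirlingSeq (n : ℕ) (hn : 1 ≤ n) : Real.sqrt π ≤ stirlingSeq n := by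
  obtain ⟨m, rfl⟩ : ∃ m, n = m + 1 := ⟨n - 1, by omega⟩
  have h := Stirling.stirlingSeq'_antitone.le_of_tendsto
    (Stirling.tendsto_stirlingSeq_sqrt_pi.comp (Filter.tendsto_add_atTop_nat 1)) m
  simpa using h

lemma factorial_eq_stirling (m : ℕ) (hm : 1 ≤ m) :
    (m ! : ℝ) = stirlingSeq m * (Real.sqrt (2 * m) * ((m : ℝ) / Real.exp 1) ^ m) := by
  have hm' : (0:ℝ) < m := by exact_mod_cast hm
  have hd : (0:ℝ) < Real.sqrt (2 * m) * ((m : ℝ) / Real.exp 1) ^ m :=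
    mul_pos (Real.sqrt_pos.2 (by positivity)) (pow_pos (div_pos hm' (Real.exp_pos 1)) m)
  rw [stirlingSeq, div_mul_cancel₀ _ (ne_of_gt hd)]

lemma stirlingSeq_two' : stirlingSeq 2 = Real.exp 1 ^ 2 / 4 := by
  rw [stirlingSeq]
  rw [show (2 * (2:ℕ) : ℝ) = 2 ^ 2 by norm_num, Real.sqrt_sq (by norm_num : (0:ℝ) ≤ 2)]
  have := Real.exp_pos 1
  field_simp [Nat.factorial]
  ring

lemma stirlingSeq_le_two (m : ℕ) (hm : 2 ≤ m) : stirlingSeq m ≤ Real.exp 1 ^ 2 / 4 := by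
  obtain ⟨a, rfl⟩ : ∃ a, m = a + 2 := ⟨m - 2, by omega⟩
  rw [← stirlingSeq_two']
  exact Stirling.stirlingSeq'_antitone (by omega : 1 ≤ a + 1)

lemma stirlingSeq_pos' (m : ℕ) (hm : 1 ≤ m) : 0 < stirlingSeq m := by
  obtain ⟨a, rfl⟩ : ∃ a, m = a + 1 := ⟨m - 1, by omega⟩
  exact Stirling.stirlingSeq'_pos a

lemma scalar_key (k j : ℕ) (hk : 1 ≤ k) (hj : 1 ≤ j) (h3 : 3 ≤ k + j) :
    stirlingSeq k * stirlingSeq j * (Real.sqrt k * Real.sqrt j)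
      ≤ Real.sqrt π * ((k : ℝ) + j) := by
  have hk' : (0:ℝ) < k := by exact_mod_cast hk
  have hj' : (0:ℝ) < j := by exact_mod_cast hj
  have hcK := stirlingSeq_pos' k hk
  have hcJ := stirlingSeq_pos' j hj
  have hE := Real.exp_one_lt_d9
  have hE0 := Real.exp_pos 1
  have he2 : Real.exp 1 ^ 2 < 7.3890561 := by nlinarith
  have he4 : Real.exp 1 ^ 4 < 54.5981520 := by nlinarith [he2, pow_pos hE0 2]
  have he6 : Real.exp 1 ^ 6 < 403.4289 := by nlinarith [he2, he4, pow_pos hE0 2, pow_pos hE0 4]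
  have he8 : Real.exp 1 ^ 8 < 2980.959 := by nlinarith [he4, pow_pos hE0 4]
  have hpi := Real.pi_gt_d6
  have key : (stirlingSeq k * stirlingSeq j) ^ 2 * ((k:ℝ) * j) ≤ π * ((k:ℝ) + j) ^ 2 := by
    rcases eq_or_lt_of_le hk with hk1 | hk2
    · -- k = 1
      obtain rfl : k = 1 := hk1.symm
      have hj2 : 2 ≤ j := by omega
      have hj2' : (2:ℝ) ≤ j := by exact_mod_cast hj2
      have hJ := stirlingSeq_le_two j hj2
      rw [Stirling.stirlingSeq_one]
      have hs2 : (Real.sqrt 2) ^ 2 = 2 := Real.sq_sqrt (by norm_num)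
      have hexp : (Real.exp 1 / Real.sqrt 2 * stirlingSeq j) ^ 2
          = Real.exp 1 ^ 2 / 2 * stirlingSeq j ^ 2 := by
        rw [mul_pow, div_pow, hs2]
      rw [hexp]
      have hJ2 : stirlingSeq j ^ 2 ≤ Real.exp 1 ^ 4 / 16 := by nlinarith
      have hq : 9 * (j:ℝ) ≤ 2 * (1 + (j:ℝ)) ^ 2 := by nlinarith
      have c0 : Real.exp 1 ^ 2 / 2 * stirlingSeq j ^ 2 ≤ Real.exp 1 ^ 6 / 32 := by
        nlinarith [hJ2, pow_pos hE0 2]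
      have c1 : Real.exp 1 ^ 2 / 2 * stirlingSeq j ^ 2 * ((1:ℝ) * j)
          ≤ Real.exp 1 ^ 6 / 32 * j := by nlinarith [c0, hj']
      have c2 : Real.exp 1 ^ 6 / 32 * (j:ℝ) ≤ π * ((1:ℝ) + j) ^ 2 := by
        nlinarith [sq_nonneg (1 + (j:ℝ))]
      push_cast
      linarith
    · rcases eq_or_lt_of_le hj with hj1 | hj2
      · -- j = 1
        obtain rfl : j = 1 := hj1.symm
        have hk2' : 2 ≤ k := by omega
        have hk2'' : (2:ℝ) ≤ k := by exact_mod_cast hk2'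
        have hK := stirlingSeq_le_two k hk2'
        rw [Stirling.stirlingSeq_one]
        have hs2 : (Real.sqrt 2) ^ 2 = 2 := Real.sq_sqrt (by norm_num)
        have hexp : (stirlingSeq k * (Real.exp 1 / Real.sqrt 2)) ^ 2
            = Real.exp 1 ^ 2 / 2 * stirlingSeq k ^ 2 := by
          rw [mul_pow, div_pow, hs2]; ring
        rw [hexp]
        have hK2 : stirlingSeq k ^ 2 ≤ Real.exp 1 ^ 4 / 16 := by nlinarith
        have hq : 9 * (k:ℝ) ≤ 2 * ((k:ℝ) + 1) ^ 2 := by nlinarith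
        have c0 : Real.exp 1 ^ 2 / 2 * stirlingSeq k ^ 2 ≤ Real.exp 1 ^ 6 / 32 := by
          nlinarith [hK2, pow_pos hE0 2]
        have c1 : Real.exp 1 ^ 2 / 2 * stirlingSeq k ^ 2 * ((k:ℝ) * 1)
            ≤ Real.exp 1 ^ 6 / 32 * k := by nlinarith [c0, hk']
        have c2 : Real.exp 1 ^ 6 / 32 * (k:ℝ) ≤ π * ((k:ℝ) + 1) ^ 2 := by
          nlinarith [sq_nonneg ((k:ℝ) + 1)]
        push_cast
        linarith
      · -- both ≥ 2
        have hK := stirlingSeq_le_two k hk2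
        have hJ := stirlingSeq_le_two j hj2
        have h1 : stirlingSeq k * stirlingSeq j ≤ Real.exp 1 ^ 2 / 4 * (Real.exp 1 ^ 2 / 4) :=
          mul_le_mul hK hJ hcJ.le (by positivity)
        have hcc : (stirlingSeq k * stirlingSeq j) ^ 2 ≤ Real.exp 1 ^ 8 / 256 := by
          nlinarith [h1, mul_pos hcK hcJ]
        have hkj : 4 * ((k:ℝ) * j) ≤ ((k:ℝ) + j) ^ 2 := by nlinarith [sq_nonneg ((k:ℝ) - j)]
        calc (stirlingSeq k * stirlingSeq j) ^ 2 * ((k:ℝ) * j)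
            ≤ Real.exp 1 ^ 8 / 256 * ((k:ℝ) * j) :=
              mul_le_mul_of_nonneg_right hcc (by positivity)
          _ ≤ Real.exp 1 ^ 8 / 1024 * (((k:ℝ) + j) ^ 2) := by nlinarith [pow_pos hE0 8]
          _ ≤ π * ((k:ℝ) + j) ^ 2 := by nlinarith [sq_nonneg ((k:ℝ) + j)]
  have hrw : Real.sqrt π * ((k:ℝ) + j) = Real.sqrt (π * ((k:ℝ) + j) ^ 2) := by
    rw [Real.sqrt_mul Real.pi_pos.le, Real.sqrt_sq (by positivity)]
  rw [hrw]
  apply Real.le_sqrt_of_sq_le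
  calc (stirlingSeq k * stirlingSeq j * (Real.sqrt k * Real.sqrt j)) ^ 2
      = (stirlingSeq k * stirlingSeq j) ^ 2 * ((Real.sqrt k) ^ 2 * (Real.sqrt j) ^ 2) := by ring
    _ = (stirlingSeq k * stirlingSeq j) ^ 2 * ((k:ℝ) * j) := by
        rw [Real.sq_sqrt hk'.le, Real.sq_sqrt hj'.le]
    _ ≤ π * ((k:ℝ) + j) ^ 2 := key

lemma choose_key (n k : ℕ) (hk : 1 ≤ k) (hkn : k < n) :
    ((n:ℝ)) ^ n ≤ Real.sqrt (2 * n) * (n.choose k) * (k:ℝ) ^ k * ((n - k : ℕ) : ℝ) ^ (n - k) := by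
  set j := n - k with hjdef
  have hj1 : 1 ≤ j := by omega
  have hnkj : n = k + j := by omega
  by_cases hn2 : n = 2
  · have hk1 : k = 1 := by omega
    have hj1' : j = 1 := by omega
    subst hn2 hk1
    rw [hj1']
    have h4 : Real.sqrt (2 * ((2:ℕ):ℝ)) = 2 := by
      rw [show (2 * ((2:ℕ):ℝ)) = 2 ^ 2 by norm_num]
      exact Real.sqrt_sq (by norm_num)
    rw [h4]
    norm_num [Nat.choose]
  · have hn3 : 3 ≤ n := by omega
    have h3 : 3 ≤ k + j := by omega
    have hk' : (0:ℝ) < k := by exact_mod_cast hk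
    have hj' : (0:ℝ) < j := by exact_mod_cast hj1
    have hn' : (0:ℝ) < n := by exact_mod_cast (by omega : 0 < n)
    have hE : (0:ℝ) < Real.exp 1 := Real.exp_pos 1
    have hEn : (0:ℝ) < Real.exp 1 ^ n := pow_pos hE n
    set C : ℝ := (n.choose k : ℝ) with hC
    have hC0 : 0 < C := by rw [hC]; exact_mod_cast Nat.choose_pos hkn.le
    set sK := stirlingSeq k
    set sJ := stirlingSeq j
    set sN := stirlingSeq n
    have hfn := factorial_eq_stirling n (by omega)
    have hfk := factorial_eq_stirling k hk
    have hfj := factorial_eq_stirling j hj1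
    have hch : (n ! : ℝ) = C * ((k ! : ℝ) * (j ! : ℝ)) := by
      rw [hC]
      have := Nat.choose_mul_factorial_mul_factorial hkn.le
      push_cast [← this]
      ring
    have h1 : Real.sqrt π * (Real.sqrt (2 * n) * ((n:ℝ) / Real.exp 1) ^ n)
        ≤ C * ((sK * (Real.sqrt (2 * k) * ((k:ℝ) / Real.exp 1) ^ k))
            * (sJ * (Real.sqrt (2 * j) * ((j:ℝ) / Real.exp 1) ^ j))) := by
      calc Real.sqrt π * (Real.sqrt (2 * n) * ((n:ℝ) / Real.exp 1) ^ n)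
          ≤ sN * (Real.sqrt (2 * n) * ((n:ℝ) / Real.exp 1) ^ n) :=
            mul_le_mul_of_nonneg_right (sqrtPi_le_stirlingSeq n (by omega)) (by positivity)
        _ = (n ! : ℝ) := hfn.symm
        _ = C * ((k ! : ℝ) * (j ! : ℝ)) := hch
        _ = _ := by rw [hfk, hfj]
    have hEkj : Real.exp 1 ^ k * Real.exp 1 ^ j = Real.exp 1 ^ n := by
      rw [← pow_add, ← hnkj]
    have h2 : Real.sqrt π * Real.sqrt (2 * n) * (n:ℝ) ^ n
        ≤ C * sK * sJ * (Real.sqrt (2 * k) * Real.sqrt (2 * j)) * ((k:ℝ) ^ k * (j:ℝ) ^ j) := by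
      have h := mul_le_mul_of_nonneg_right h1 hEn.le
      have eL : Real.sqrt π * (Real.sqrt (2 * n) * ((n:ℝ) / Real.exp 1) ^ n) * Real.exp 1 ^ n
          = Real.sqrt π * Real.sqrt (2 * n) * (n:ℝ) ^ n := by
        rw [div_pow]; field_simp
      have eR : (C * ((sK * (Real.sqrt (2 * k) * ((k:ℝ) / Real.exp 1) ^ k))
            * (sJ * (Real.sqrt (2 * j) * ((j:ℝ) / Real.exp 1) ^ j)))) * Real.exp 1 ^ n
          = C * sK * sJ * (Real.sqrt (2 * k) * Real.sqrt (2 * j)) * ((k:ℝ) ^ k * (j:ℝ) ^ j) := by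
        rw [div_pow, div_pow, ← hEkj]
        field_simp
      rw [← eL, ← eR]
      exact h
    have hsplit : Real.sqrt (2 * (k:ℝ)) * Real.sqrt (2 * (j:ℝ))
        = 2 * (Real.sqrt k * Real.sqrt j) := by
      rw [Real.sqrt_mul (by norm_num : (0:ℝ) ≤ 2), Real.sqrt_mul (by norm_num : (0:ℝ) ≤ 2)]
      have h22 : Real.sqrt 2 * Real.sqrt 2 = 2 := Real.mul_self_sqrt (by norm_num)
      linear_combination (Real.sqrt k * Real.sqrt j) * h22
    have hsc := scalar_key k j hk hj1 h3
    have hkjn : (k:ℝ) + j = n := by exact_mod_cast congrArg (Nat.cast (R := ℝ)) hnkj.symm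
    rw [hkjn] at hsc
    have h5 : C * sK * sJ * (Real.sqrt (2 * k) * Real.sqrt (2 * j)) * ((k:ℝ) ^ k * (j:ℝ) ^ j)
        ≤ 2 * C * ((k:ℝ) ^ k * (j:ℝ) ^ j) * (Real.sqrt π * n) := by
      rw [hsplit]
      have hmul := mul_le_mul_of_nonneg_left hsc
        (by positivity : (0:ℝ) ≤ 2 * C * ((k:ℝ) ^ k * (j:ℝ) ^ j))
      calc C * sK * sJ * (2 * (Real.sqrt k * Real.sqrt j)) * ((k:ℝ) ^ k * (j:ℝ) ^ j)
          = 2 * C * ((k:ℝ) ^ k * (j:ℝ) ^ j) * (sK * sJ * (Real.sqrt k * Real.sqrt j)) := by ring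
        _ ≤ 2 * C * ((k:ℝ) ^ k * (j:ℝ) ^ j) * (Real.sqrt π * n) := hmul
    have hs2n : Real.sqrt (2 * (n:ℝ)) * Real.sqrt (2 * n) = 2 * n :=
      Real.mul_self_sqrt (by positivity)
    have hpos : (0:ℝ) < Real.sqrt π * Real.sqrt (2 * n) := by
      have := Real.pi_pos
      positivity
    refine le_of_mul_le_mul_right ?_ hpos
    calc (n:ℝ) ^ n * (Real.sqrt π * Real.sqrt (2 * n))
        = Real.sqrt π * Real.sqrt (2 * n) * (n:ℝ) ^ n := by ring
      _ ≤ 2 * C * ((k:ℝ) ^ k * (j:ℝ) ^ j) * (Real.sqrt π * n) := le_trans h2 h5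
      _ = Real.sqrt (2 * n) * C * (k:ℝ) ^ k * (j:ℝ) ^ j * (Real.sqrt π * Real.sqrt (2 * n)) := by
          rw [show Real.sqrt (2*(n:ℝ)) * C * (k:ℝ)^k * (j:ℝ)^j * (Real.sqrt π * Real.sqrt (2*n))
              = Real.sqrt π * (Real.sqrt (2*(n:ℝ)) * Real.sqrt (2*n)) * C * ((k:ℝ)^k * (j:ℝ)^j)
              from by ring, hs2n]
          ring

end AuxStirling

set_option maxHeartbeats 1000000 in
/-- Reverse Chernoff bound: for `X ~ B(n, p)` and `p < k/n < 1`,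
`P(X ≥ k) ≥ (1/√(2n)) exp(-n D(k/n ‖ p))`. -/
theorem binomial_tail_lower_bound (n k : ℕ) (p : ℝ) (hp0 : 0 < p) (hp1 : p < 1)
    (hlow : p < (k : ℝ) / n) (hhigh : (k : ℝ) / n < 1) :
    (1 / Real.sqrt (2 * n)) * Real.exp (-(n : ℝ) * relEntropy ((k : ℝ) / n) p)
      ≤ ∑ i ∈ Finset.Icc k n, (n.choose i : ℝ) * p ^ i * (1 - p) ^ (n - i) := by
  have hn : 0 < n := by
    rcases Nat.eq_zero_or_pos n with h | h
    · subst h; norm_num at hlow; linarith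
    · exact h
  have hn' : (0:ℝ) < n := by exact_mod_cast hn
  have hk : 0 < k := by
    rcases Nat.eq_zero_or_pos k with h | h
    · subst h; norm_num at hlow; linarith
    · exact h
  have hk' : (0:ℝ) < k := by exact_mod_cast hk
  have hkn : k < n := by
    have : (k:ℝ) < n := (div_lt_one hn').mp hhigh
    exact_mod_cast this
  set j := n - k with hjdef
  have hj1 : 0 < j := by omega
  have hj' : (0:ℝ) < j := by exact_mod_cast hj1
  have hjj : ((j:ℕ):ℝ) = (n:ℝ) - k := by
    rw [hjdef]; push_cast [Nat.cast_sub hkn.le]; ring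
  have hnkj : n = k + j := by omega
  have hp1' : (0:ℝ) < 1 - p := by linarith
  set A := p * (n:ℝ) / k with hA
  set B := (1 - p) * (n:ℝ) / j with hB
  have hA0 : 0 < A := by positivity
  have hB0 : 0 < B := by positivity
  -- rewrite the exponential
  have hxj : 1 - (k:ℝ)/n = (j:ℝ)/n := by rw [hjj]; field_simp
  have l1 : Real.log ((k:ℝ)/n / p) = Real.log k - Real.log n - Real.log p := by
    rw [Real.log_div (by positivity) (by positivity), Real.log_div (by positivity) (by positivity)]
  have l2 : Real.log ((j:ℝ)/n / (1 - p)) = Real.log j - Real.log n - Real.log (1 - p) := by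
    rw [Real.log_div (by positivity) (by positivity), Real.log_div (by positivity) (by positivity)]
  have l3 : Real.log A = Real.log p + Real.log n - Real.log k := by
    rw [hA, Real.log_div (by positivity) (by positivity),
      Real.log_mul (by positivity) (by positivity)]
  have l4 : Real.log B = Real.log (1 - p) + Real.log n - Real.log j := by
    rw [hB, Real.log_div (by positivity) (by positivity),
      Real.log_mul (by positivity) (by positivity)]
  have hre : -(n:ℝ) * relEntropy ((k:ℝ)/n) p = (k:ℝ) * Real.log A + (j:ℝ) * Real.log B := by
    unfold relEntropy
    rw [hxj, l1, l2, l3, l4]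
    field_simp
    ring
  have hexp : Real.exp (-(n:ℝ) * relEntropy ((k:ℝ)/n) p) = A ^ k * B ^ j := by
    rw [hre, Real.exp_add, Real.exp_nat_mul, Real.exp_nat_mul, Real.exp_log hA0, Real.exp_log hB0]
  -- single term bound
  have hsum : (n.choose k : ℝ) * p ^ k * (1 - p) ^ (n - k)
      ≤ ∑ i ∈ Finset.Icc k n, (n.choose i : ℝ) * p ^ i * (1 - p) ^ (n - i) :=
    Finset.single_le_sum (f := fun i => (n.choose i : ℝ) * p ^ i * (1 - p) ^ (n - i))
      (fun i _ => by positivity) (Finset.mem_Icc.mpr ⟨le_refl k, hkn.le⟩)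
  have hck := choose_key n k hk hkn
  rw [← hjdef] at hck
  have hC0 : (0:ℝ) < (n.choose k : ℝ) := by exact_mod_cast Nat.choose_pos hkn.le
  have hs2n : (0:ℝ) < Real.sqrt (2 * n) := Real.sqrt_pos.2 (by positivity)
  have hnn : (n:ℝ) ^ n = (n:ℝ) ^ k * (n:ℝ) ^ j := by rw [← pow_add, ← hnkj]
  have key2 : 1 / Real.sqrt (2 * (n:ℝ)) * (A ^ k * B ^ j)
      = (p ^ k * (1 - p) ^ j / (Real.sqrt (2 * n) * (k:ℝ) ^ k * (j:ℝ) ^ j)) * (n:ℝ) ^ n := by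
    rw [hA, hB, div_pow, div_pow, mul_pow, mul_pow, hnn]
    field_simp
  calc (1 / Real.sqrt (2 * (n:ℝ))) * Real.exp (-(n : ℝ) * relEntropy ((k : ℝ) / n) p)
      = (p ^ k * (1 - p) ^ j / (Real.sqrt (2 * n) * (k:ℝ) ^ k * (j:ℝ) ^ j)) * (n:ℝ) ^ n := by
        rw [hexp]; exact key2
    _ ≤ (p ^ k * (1 - p) ^ j / (Real.sqrt (2 * n) * (k:ℝ) ^ k * (j:ℝ) ^ j))
          * (Real.sqrt (2 * n) * (n.choose k) * (k:ℝ) ^ k * (j:ℝ) ^ j) :=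
        mul_le_mul_of_nonneg_left hck (by positivity)
    _ = (n.choose k : ℝ) * p ^ k * (1 - p) ^ (n - k) := by
        rw [← hjdef]
        field_simp
    _ ≤ _ := hsum
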